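/- Let C be a cyclic code of length n over a field F with gcd(n, char F) = 1, with generating idempotent e(x). Then the dual code C^⊥ has generating idempotent 1 - e(x^{-1}), where e(x^{-1}) denotes the image of e under x ↦ x^{n-1} in F[x]/(x^n - 1). Moreover, if C has generator polynomial g(x) with g(x)h(x) = x^n - 1, then C^⊥ has generator polynomial the reciprocal polynomial h*(x) = x^{deg h} h(1/x). -/

import Mathlib

open Polynomial

open AdjoinRoot



section Aux
variable {F : Type*} [Field F] (n : ℕ)


lemma aux_rootn : AdjoinRoot.root ((X : F[X]) ^ n - 1) ^ n = 1 := by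
  have := AdjoinRoot.mk_self (f := ((X : F[X]) ^ n - 1))
  rw [map_sub, map_pow, AdjoinRoot.mk_X, map_one, sub_eq_zero] at this
  exact this

lemma aux_inv_unique {a b u : AdjoinRoot ((X : F[X]) ^ n - 1)} (ha : a * u = 1) (hb : b * u = 1) : a = b := by
  calc a = a * (b * u) := by rw [hb, mul_one]
    _ = b * (a * u) := by ring
    _ = b := by rw [ha, mul_one]

lemma aux_pow_mod (m : ℕ) : AdjoinRoot.root ((X : F[X]) ^ n - 1) ^ m = AdjoinRoot.root ((X : F[X]) ^ n - 1) ^ (m % n) := by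
  conv_lhs => rw [← Nat.mod_add_div m n, pow_add, pow_mul, aux_rootn, one_pow, mul_one]

variable (hn : 0 < n)

noncomputable def sig : AdjoinRoot ((X : F[X]) ^ n - 1) →ₐ[F] AdjoinRoot ((X : F[X]) ^ n - 1) :=
  AdjoinRoot.liftAlgHom _ (Algebra.ofId F _) (AdjoinRoot.root ((X : F[X]) ^ n - 1) ^ (n - 1)) (by
    change aeval (AdjoinRoot.root ((X : F[X]) ^ n - 1) ^ (n - 1)) ((X : F[X]) ^ n - 1) = 0
    rw [map_sub, map_pow, aeval_X, map_one, ← pow_mul, mul_comm, pow_mul, aux_rootn, one_pow,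
      sub_self])

lemma sig_mk (p : F[X]) : sig n (AdjoinRoot.mk _ p) = aeval (AdjoinRoot.root ((X : F[X]) ^ n - 1) ^ (n - 1)) p := by
  exact AdjoinRoot.liftAlgHom_mk _ _ _ _ p

lemma sig_root : sig n (AdjoinRoot.root ((X : F[X]) ^ n - 1)) = AdjoinRoot.root ((X : F[X]) ^ n - 1) ^ (n - 1) := by
  simp [sig, AdjoinRoot.liftAlgHom_root]

include hn in
lemma aux_unit : AdjoinRoot.root ((X : F[X]) ^ n - 1) ^ (n - 1) * AdjoinRoot.root ((X : F[X]) ^ n - 1) = 1 := by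
  rw [← pow_succ, Nat.sub_add_cancel hn, aux_rootn]

include hn in
lemma sig_sig (z : AdjoinRoot ((X : F[X]) ^ n - 1)) : sig n (sig n z) = z := by
  have : (sig n (F := F)).comp (sig n) = AlgHom.id F (AdjoinRoot ((X : F[X]) ^ n - 1)) := by
    apply AdjoinRoot.algHom_ext
    rw [AlgHom.comp_apply, sig_root, map_pow, sig_root, AlgHom.id_apply, ← pow_mul]
    set a := n - 1 with ha
    apply aux_inv_unique (n := n) (u := AdjoinRoot.root ((X : F[X]) ^ n - 1) ^ a)
    · rw [← pow_add]
      have h2 : a * a + a = n * a := by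
        have h1 : a + 1 = n := by omega
        calc a * a + a = (a + 1) * a := by ring
          _ = n * a := by rw [h1]
      rw [h2, pow_mul, aux_rootn, one_pow]
    · rw [← pow_succ']
      have h1 : a + 1 = n := by omega
      rw [h1, aux_rootn]
  exact congrArg (· z) this |>.trans rfl

include hn in
lemma sig_pow {j : ℕ} (hj : j < n) : sig n (AdjoinRoot.root ((X : F[X]) ^ n - 1) ^ j) = AdjoinRoot.root ((X : F[X]) ^ n - 1) ^ (n - j) := by
  rw [map_pow, sig_root, ← pow_mul]
  apply aux_inv_unique (n := n) (u := AdjoinRoot.root ((X : F[X]) ^ n - 1) ^ j)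
  · rw [← pow_add]
    have h2 : (n - 1) * j + j = n * j := by
      have h1 : (n - 1) + 1 = n := by omega
      calc (n - 1) * j + j = ((n - 1) + 1) * j := by ring
        _ = n * j := by rw [h1]
    rw [h2, pow_mul, aux_rootn, one_pow]
  · rw [← pow_add]
    have h1 : (n - j) + j = n := by omega
    rw [h1, aux_rootn]

variable (B : Module.Basis (Fin n) F (AdjoinRoot ((X : F[X]) ^ n - 1))) (hB : ∀ i : Fin n, B i = AdjoinRoot.root ((X : F[X]) ^ n - 1) ^ (i : ℕ))

include hn hB in
lemma aux_repr_pow (m : ℕ) :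
    B.repr (AdjoinRoot.root ((X : F[X]) ^ n - 1) ^ m) = Finsupp.single ⟨m % n, Nat.mod_lt m hn⟩ 1 := by
  rw [aux_pow_mod, ← hB ⟨m % n, Nat.mod_lt m hn⟩, B.repr_self]

include hn hB in
lemma aux_core [NeZero n] (i j : Fin n) :
    B.repr (AdjoinRoot.root ((X : F[X]) ^ n - 1) ^ ((i : ℕ) + (n - (j : ℕ)))) 0 = if i = j then 1 else 0 := by
  rw [aux_repr_pow n hn B hB, Finsupp.single_apply]
  congr 1
  apply propext
  rw [Fin.ext_iff, Fin.ext_iff, Fin.val_zero]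
  show ((i : ℕ) + (n - (j : ℕ))) % n = 0 ↔ (i : ℕ) = (j : ℕ)
  have hi := i.isLt
  have hj := j.isLt
  constructor
  · intro hmod
    obtain ⟨t, ht⟩ := Nat.dvd_of_mod_eq_zero hmod
    rcases t with _ | _ | t
    · omega
    · omega
    · exfalso
      have hge : 2 * n ≤ n * (t + 1 + 1) := by nlinarith
      omega
  · intro hij
    have : (i : ℕ) + (n - j) = n := by omega
    rw [this, Nat.mod_self]

include hB in
lemma aux_expand (z : AdjoinRoot ((X : F[X]) ^ n - 1)) : z = ∑ i : Fin n, B.repr z i • AdjoinRoot.root ((X : F[X]) ^ n - 1) ^ (i : ℕ) := by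
  conv_lhs => rw [← B.sum_repr z]
  exact Finset.sum_congr rfl fun i _ => by rw [hB]

include hn hB in
lemma aux_key [NeZero n] (y c : AdjoinRoot ((X : F[X]) ^ n - 1)) :
    B.repr (y * sig n c) 0 = ∑ i : Fin n, B.repr y i * B.repr c i := by
  conv_lhs => rw [aux_expand n B hB y, aux_expand n B hB c]
  rw [map_sum, Finset.sum_mul_sum]
  have step : ∀ i j : Fin n,
      (B.repr y i • AdjoinRoot.root ((X : F[X]) ^ n - 1) ^ (i : ℕ)) * sig n (B.repr c j • AdjoinRoot.root ((X : F[X]) ^ n - 1) ^ (j : ℕ))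
        = (B.repr y i * B.repr c j) • AdjoinRoot.root ((X : F[X]) ^ n - 1) ^ ((i : ℕ) + (n - (j : ℕ))) := by
    intro i j
    rw [map_smul, sig_pow n hn j.isLt, smul_mul_smul_comm, pow_add]
  simp only [step]
  rw [map_sum, Finsupp.coe_finset_sum, Finset.sum_apply]
  refine Finset.sum_congr rfl fun i _ => ?_
  rw [map_sum, Finsupp.coe_finset_sum, Finset.sum_apply]
  have : ∀ j : Fin n, B.repr ((B.repr y i * B.repr c j) • AdjoinRoot.root ((X : F[X]) ^ n - 1) ^ ((i : ℕ) + (n - (j : ℕ)))) 0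
      = (B.repr y i * B.repr c j) * (if i = j then 1 else 0) := by
    intro j
    rw [map_smul, Finsupp.smul_apply, aux_core n hn B hB i j, smul_eq_mul]
  simp only [this, mul_ite, mul_one, mul_zero]
  simp

include hn hB in
lemma aux_shift [NeZero n] (z : AdjoinRoot ((X : F[X]) ^ n - 1)) (k : Fin n) :
    B.repr (z * AdjoinRoot.root ((X : F[X]) ^ n - 1) ^ (n - (k : ℕ))) 0 = B.repr z k := by
  conv_lhs => rw [aux_expand n B hB z]
  rw [Finset.sum_mul]
  have step : ∀ j : Fin n,
      (B.repr z j • AdjoinRoot.root ((X : F[X]) ^ n - 1) ^ (j : ℕ)) * AdjoinRoot.root ((X : F[X]) ^ n - 1) ^ (n - (k : ℕ))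
        = B.repr z j • AdjoinRoot.root ((X : F[X]) ^ n - 1) ^ ((j : ℕ) + (n - (k : ℕ))) := by
    intro j; rw [smul_mul_assoc, pow_add]
  simp only [step]
  rw [map_sum, Finsupp.coe_finset_sum, Finset.sum_apply]
  have : ∀ j : Fin n, B.repr (B.repr z j • AdjoinRoot.root ((X : F[X]) ^ n - 1) ^ ((j : ℕ) + (n - (k : ℕ)))) 0
      = B.repr z j * (if j = k then 1 else 0) := by
    intro j
    rw [map_smul, Finsupp.smul_apply, aux_core n hn B hB j k, smul_eq_mul]
  simp only [this, mul_ite, mul_one, mul_zero]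
  simp

end Aux

/-- Let `C` be a cyclic code of length `n` over a field `F` with
`gcd(n, char F) = 1`, with generating idempotent `e(x)` (the image of `epoly`) and
generator polynomial `g`, `g * h = x^n - 1`. Identify `F[x]/(x^n-1)` with `F^n` via
the monomial basis `B` (`B i = x^i`), and let `C'` be the dual code of `C` under the
standard inner product. Then `C'` has generating idempotent `1 - e(x^{-1})`
(with `x^{-1} = x^{n-1}`) and generator polynomial the reciprocal polynomial `h*`. -/
theorem stmt18 {F : Type*} [Field F] (n : ℕ) (hn : 0 < n)
    (hchar : Nat.Coprime n (ringChar F))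
    (B : Module.Basis (Fin n) F (AdjoinRoot ((X : F[X]) ^ n - 1)))
    (hB : ∀ i : Fin n, B i = AdjoinRoot.root ((X : F[X]) ^ n - 1) ^ (i : ℕ))
    (C C' : Ideal (AdjoinRoot ((X : F[X]) ^ n - 1)))
    (epoly : F[X])
    (he : AdjoinRoot.mk ((X : F[X]) ^ n - 1) epoly *
        AdjoinRoot.mk ((X : F[X]) ^ n - 1) epoly =
      AdjoinRoot.mk ((X : F[X]) ^ n - 1) epoly)
    (hCe : C = Ideal.span {AdjoinRoot.mk ((X : F[X]) ^ n - 1) epoly})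
    (g h : F[X]) (hg : g.Monic) (hgh : g * h = X ^ n - 1)
    (hCg : C = Ideal.span {AdjoinRoot.mk ((X : F[X]) ^ n - 1) g})
    (hC' : ∀ y, y ∈ C' ↔ ∀ c ∈ C, ∑ i, B.repr y i * B.repr c i = 0) :
    C' = Ideal.span
        {1 - Polynomial.aeval (AdjoinRoot.root ((X : F[X]) ^ n - 1) ^ (n - 1)) epoly} ∧
      C' = Ideal.span {AdjoinRoot.mk ((X : F[X]) ^ n - 1) h.reverse} := by
  haveI : NeZero n := ⟨hn.ne'⟩
  set rt := AdjoinRoot.root ((X : F[X]) ^ n - 1) with hrt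
  set G := AdjoinRoot.mk ((X : F[X]) ^ n - 1) g with hG
  set H := AdjoinRoot.mk ((X : F[X]) ^ n - 1) h with hH
  set E := AdjoinRoot.mk ((X : F[X]) ^ n - 1) epoly with hE
  have hσσ : ∀ z : AdjoinRoot ((X : F[X]) ^ n - 1), sig n (sig n z) = z := sig_sig n hn
  have hGH : G * H = 0 := by
    rw [hG, hH, ← map_mul, hgh]; exact AdjoinRoot.mk_self
  have hann : ∀ z, G * z = 0 ↔ H ∣ z := by
    intro z
    obtain ⟨p, rfl⟩ := AdjoinRoot.mk_surjective z
    constructor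
    · intro h0
      rw [hG, ← map_mul, AdjoinRoot.mk_eq_zero, ← hgh,
        mul_dvd_mul_iff_left hg.ne_zero] at h0
      exact map_dvd (AdjoinRoot.mk ((X : F[X]) ^ n - 1)) h0
    · rintro ⟨t, ht⟩
      rw [ht]
      calc G * (H * t) = (G * H) * t := by ring
        _ = 0 := by rw [hGH, zero_mul]
  -- membership in the dual code
  have hmem : ∀ y, y ∈ C' ↔ y * sig n G = 0 := by
    intro y
    constructor
    · intro hy
      have h0 : ∀ c ∈ C, B.repr (y * sig n c) 0 = 0 := fun c hc => by
        rw [aux_key n hn B hB]; exact (hC' y).mp hy c hc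
      have hco : ∀ k : Fin n, B.repr (y * sig n G) k = 0 := by
        intro k
        rw [← aux_shift n hn B hB (y * sig n G) k]
        have hc : G * sig n (rt ^ (n - (k : ℕ))) ∈ C := by
          rw [hCg]
          exact Ideal.mul_mem_right _ _ (Ideal.subset_span rfl)
        have h1 := h0 _ hc
        rw [map_mul (sig n), hσσ, ← mul_assoc] at h1
        exact h1
      have : B.repr (y * sig n G) = 0 := Finsupp.ext hco
      exact (LinearEquiv.map_eq_zero_iff B.repr).mp this
    · intro h0
      rw [hC']
      intro c hc
      rw [← aux_key n hn B hB]
      rw [hCg, Ideal.mem_span_singleton] at hc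
      obtain ⟨t, rfl⟩ := hc
      have : y * sig n (G * t) = (y * sig n G) * sig n t := by
        rw [map_mul]; ring
      rw [this, h0, zero_mul]
      simp
  -- C' is the span of sig n H
  have hC'span : C' = Ideal.span {sig n H} := by
    ext y
    rw [hmem, Ideal.mem_span_singleton]
    constructor
    · intro h0
      have h1 : sig n y * G = 0 := by
        have := congrArg (sig n) h0
        rw [map_mul, hσσ, map_zero] at this
        exact this
      rw [mul_comm] at h1
      obtain ⟨t, ht⟩ := (hann _).mp h1
      exact ⟨sig n t, by rw [← hσσ y, ht, map_mul]⟩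
    · rintro ⟨t, rfl⟩
      have h1 : H * sig n t * G = 0 := by
        calc H * sig n t * G = (G * H) * sig n t := by ring
          _ = 0 := by rw [hGH, zero_mul]
      calc sig n H * t * sig n G = sig n (H * sig n t * G) := by
            rw [map_mul, map_mul, hσσ]
        _ = 0 := by rw [h1, map_zero]
  -- span {H} = span {1 - E}
  have hspan1 : Ideal.span {H} = Ideal.span {1 - E} := by
    have hGdE : G ∣ E := by
      rw [← Ideal.mem_span_singleton, ← hCg, hCe]
      exact Ideal.subset_span rfl
    have hEdG : E ∣ G := by
      rw [← Ideal.mem_span_singleton, ← hCe, hCg]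
      exact Ideal.subset_span rfl
    obtain ⟨s, hs⟩ := hEdG
    have hGE : G * E = G := by
      calc G * E = (E * E) * s := by rw [hs]; ring
        _ = E * s := by rw [he]
        _ = G := hs.symm
    have hd1 : H ∣ (1 - E) := by
      apply (hann _).mp
      rw [mul_sub, mul_one, hGE, sub_self]
    have hd2 : (1 - E) ∣ H := by
      obtain ⟨t, ht⟩ := hGdE
      have hHE : H * E = 0 := by
        calc H * E = (G * H) * t := by rw [ht]; ring
          _ = 0 := by rw [hGH, zero_mul]
      exact ⟨H, by rw [sub_mul, one_mul, mul_comm E H, hHE, sub_zero]⟩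
    exact le_antisymm (Ideal.span_singleton_le_span_singleton.mpr hd2)
      (Ideal.span_singleton_le_span_singleton.mpr hd1)
  constructor
  · -- idempotent generator
    rw [hC'span]
    have hd1 : H ∣ (1 - E) := by
      rw [← Ideal.mem_span_singleton, hspan1]
      exact Ideal.subset_span rfl
    have hd2 : (1 - E) ∣ H := by
      rw [← Ideal.mem_span_singleton, ← hspan1]
      exact Ideal.subset_span rfl
    have h1 : Ideal.span {sig n H} = Ideal.span {sig n (1 - E)} :=
      le_antisymm
        (Ideal.span_singleton_le_span_singleton.mpr (_root_.map_dvd (sig n) hd2))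
        (Ideal.span_singleton_le_span_singleton.mpr (_root_.map_dvd (sig n) hd1))
    rw [h1, map_sub, map_one, hE, sig_mk]
  · -- reciprocal generator
    rw [hC'span]
    letI : Invertible (rt ^ (n - 1)) :=
      ⟨rt, by rw [mul_comm]; exact aux_unit n hn, aux_unit n hn⟩
    have hrev := Polynomial.eval₂_reflect_mul_pow (algebraMap F (AdjoinRoot ((X : F[X]) ^ n - 1)))
      (rt ^ (n - 1)) h.natDegree h le_rfl
    have hinv : (⅟ (rt ^ (n - 1)) : AdjoinRoot ((X : F[X]) ^ n - 1)) = rt := rfl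
    rw [hinv] at hrev
    have hσH : sig n H = AdjoinRoot.mk ((X : F[X]) ^ n - 1) h.reverse * (rt ^ (n - 1)) ^ h.natDegree := by
      rw [hH, sig_mk, ← AdjoinRoot.aeval_eq, Polynomial.reverse, aeval_def, aeval_def, ← hrev]
    have hu : ((rt ^ (n - 1)) ^ h.natDegree) * rt ^ h.natDegree = 1 := by
      rw [← mul_pow, aux_unit n hn, one_pow]
    apply le_antisymm
    · apply Ideal.span_singleton_le_span_singleton.mpr
      exact ⟨(rt ^ (n - 1)) ^ h.natDegree, hσH⟩
    · apply Ideal.span_singleton_le_span_singleton.mpr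
      refine ⟨rt ^ h.natDegree, ?_⟩
      calc AdjoinRoot.mk ((X : F[X]) ^ n - 1) h.reverse
          = AdjoinRoot.mk ((X : F[X]) ^ n - 1) h.reverse * (((rt ^ (n - 1)) ^ h.natDegree) * rt ^ h.natDegree) := by
            rw [hu, mul_one]
        _ = sig n H * rt ^ h.natDegree := by rw [hσH]; ring
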